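/- A C4-free graph G is localizable if and only if each vertex of G is contained in exactly one simplicial clique. -/

import Mathlib

variable {V : Type*} [Fintype V] [DecidableEq V]

/-- `S` is an independent set in `G`. -/
def IsIndep (G : SimpleGraph V) (S : Finset V) : Prop :=
  ∀ ⦃u⦄, u ∈ S → ∀ ⦃v⦄, v ∈ S → ¬ G.Adj u v

/-- `S` is a maximal independent set in `G`. -/
def MaxIndep (G : SimpleGraph V) (S : Finset V) : Prop :=
  IsIndep G S ∧ ∀ T, IsIndep G T → S ⊆ T → T = S

/-- `C` is a strong clique in `G`: a clique meeting every maximal independent set. -/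
def IsStrongClique (G : SimpleGraph V) (C : Finset V) : Prop :=
  G.IsClique ↑C ∧ ∀ S, MaxIndep G S → (C ∩ S).Nonempty

/-- `G` is localizable: its vertex set partitions into strong cliques. -/
def Localizable (G : SimpleGraph V) : Prop :=
  ∃ (k : ℕ) (C : Fin k → Finset V), (∀ j, IsStrongClique G (C j)) ∧ ∀ v, ∃! j, v ∈ C j

/-- The independence number `α(G)`. -/
noncomputable def alpha (G : SimpleGraph V) : ℕ :=
  sSup {n | ∃ S : Finset V, IsIndep G S ∧ S.card = n}

/-- The independent domination number `i(G)`. -/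
noncomputable def indomNum (G : SimpleGraph V) : ℕ :=
  sInf {n | ∃ S : Finset V, MaxIndep G S ∧ S.card = n}

/-- The clique cover number `θ(G)`. -/
noncomputable def theta (G : SimpleGraph V) : ℕ :=
  sInf {n | ∃ C : Fin n → Finset V, (∀ j, G.IsClique ↑(C j)) ∧ ∀ v, ∃! j, v ∈ C j}

/-- `G` is well-covered: all maximal independent sets have the same size. -/
def WellCovered (G : SimpleGraph V) : Prop :=
  ∀ S T, MaxIndep G S → MaxIndep G T → S.card = T.card

/-- `G` has no induced cycle on four vertices. -/
def C4Free (G : SimpleGraph V) : Prop :=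
  ¬ ∃ a b c d : V, a ≠ c ∧ b ≠ d ∧ G.Adj a b ∧ G.Adj b c ∧ G.Adj c d ∧ G.Adj d a ∧
      ¬ G.Adj a c ∧ ¬ G.Adj b d

section Aux

variable (G : SimpleGraph V) [DecidableRel G.Adj]

lemma mem_closedNbhd {w x : V} : x ∈ insert w (G.neighborFinset w) ↔ x = w ∨ G.Adj w x := by
  simp [SimpleGraph.mem_neighborFinset]

/-- Every independent set extends to a maximal independent set. -/
lemma exists_maxIndep_superset (S : Finset V) (hS : IsIndep G S) :
    ∃ T, MaxIndep G T ∧ S ⊆ T := by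
  classical
  obtain ⟨T, hT, hmax⟩ := Finset.exists_max_image
      (Finset.univ.powerset.filter (fun T => IsIndep G T ∧ S ⊆ T)) Finset.card
      ⟨S, by simp [hS]⟩
  rw [Finset.mem_filter] at hT
  refine ⟨T, ⟨hT.2.1, ?_⟩, hT.2.2⟩
  intro T' hT' hsub
  refine (Finset.eq_of_subset_of_card_le hsub (hmax T' ?_)).symm
  rw [Finset.mem_filter]
  exact ⟨by simp, hT', hT.2.2.trans hsub⟩

/-- A simplicial clique is strong. -/
lemma simplicial_strong (w : V) (hclique : G.IsClique ↑(insert w (G.neighborFinset w))) :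
    IsStrongClique G (insert w (G.neighborFinset w)) := by
  refine ⟨hclique, fun S hS => ?_⟩
  by_cases hw : w ∈ S
  · exact ⟨w, Finset.mem_inter.2 ⟨Finset.mem_insert_self _ _, hw⟩⟩
  by_cases hadj : ∃ s ∈ S, G.Adj w s
  · obtain ⟨s, hsS, hws⟩ := hadj
    exact ⟨s, Finset.mem_inter.2 ⟨(mem_closedNbhd G).2 (Or.inr hws), hsS⟩⟩
  push_neg at hadj
  exfalso
  have hind : IsIndep G (insert w S) := by
    intro u hu v hv huv
    rcases Finset.mem_insert.1 hu with h1 | h1 <;> rcases Finset.mem_insert.1 hv with h2 | h2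
    · rw [h1, h2] at huv; exact G.irrefl huv
    · rw [h1] at huv; exact hadj v h2 huv
    · rw [h2] at huv; exact hadj u h1 huv.symm
    · exact hS.1 h1 h2 huv
  have heq := hS.2 _ hind (Finset.subset_insert _ _)
  exact hw (heq ▸ Finset.mem_insert_self w S)

/-- In a C4-free graph, the traces on a clique of two adjacent outside vertices
are comparable. -/
lemma traces_comparable (hG : C4Free G) {C : Finset V} (hC : G.IsClique ↑C)
    {u u' : V} (hu : u ∉ C) (hu' : u' ∉ C) (h : G.Adj u u') :
    G.neighborFinset u ∩ C ⊆ G.neighborFinset u' ∩ C ∨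
      G.neighborFinset u' ∩ C ⊆ G.neighborFinset u ∩ C := by
  by_contra hcon
  push_neg at hcon
  obtain ⟨a, ha, ha'⟩ := Finset.not_subset.1 hcon.1
  obtain ⟨b, hb, hb'⟩ := Finset.not_subset.1 hcon.2
  rw [Finset.mem_inter, SimpleGraph.mem_neighborFinset] at ha hb
  have haC : a ∈ C := ha.2
  have hbC : b ∈ C := hb.2
  have hanb : ¬ G.Adj u' a := by
    intro hadj
    exact ha' (Finset.mem_inter.2 ⟨(SimpleGraph.mem_neighborFinset _ _ _).2 hadj, haC⟩)
  have hbnb : ¬ G.Adj u b := by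
    intro hadj
    exact hb' (Finset.mem_inter.2 ⟨(SimpleGraph.mem_neighborFinset _ _ _).2 hadj, hbC⟩)
  have hab : a ≠ b := by
    rintro rfl
    exact hbnb ha.1
  refine hG ⟨a, u, u', b, ?_, ?_, ha.1.symm, h, hb.1, hC hbC haC hab.symm,
    fun hh => hanb hh.symm, hbnb⟩
  · rintro rfl; exact hu' haC
  · rintro rfl; exact hu hbC

/-- In a C4-free graph, every strong clique is simplicial. -/
lemma strong_simplicial (hG : C4Free G) {C : Finset V} (hC : IsStrongClique G C) :
    ∃ w, C = insert w (G.neighborFinset w) := by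
  classical
  by_contra hcon
  push_neg at hcon
  -- C is nonempty
  obtain ⟨T0, hT0, -⟩ := exists_maxIndep_superset G ∅ (by intro u hu; simp at hu)
  obtain ⟨c0, hc0⟩ := hC.2 T0 hT0
  -- every vertex of C has a neighbor outside C
  have hout : ∀ c ∈ C, ∃ x, x ∉ C ∧ G.Adj c x := by
    intro c hc
    have hsub : C ⊆ insert c (G.neighborFinset c) := by
      intro x hx
      rcases eq_or_ne x c with rfl | hne
      · exact Finset.mem_insert_self _ _
      · exact (mem_closedNbhd G).2 (Or.inr (hC.1 hc hx hne.symm))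
    obtain ⟨x, hx1, hx2⟩ := Finset.exists_of_ssubset (hsub.ssubset_of_ne (hcon c))
    refine ⟨x, hx2, ?_⟩
    rcases (mem_closedNbhd G).1 hx1 with rfl | hadj
    · exact absurd hc hx2
    · exact hadj
  set M := Fintype.card V with hM
  let e := Fintype.equivFin V
  set g : V → ℕ := fun u => (G.neighborFinset u ∩ C).card with hg
  set key : V → ℕ ×ₗ ℕ := fun u => toLex (M - g u, (e u : ℕ)) with hkeydef
  set K : V → Finset V := fun c => Finset.univ.filter (fun u => u ∉ C ∧ G.Adj c u) with hKdef
  have hKmem : ∀ c u, u ∈ K c ↔ u ∉ C ∧ G.Adj c u := by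
    intro c u; simp [hKdef]
  have hgle : ∀ u, g u ≤ M := by
    intro u
    simpa [hM] using Finset.card_le_univ (G.neighborFinset u ∩ C)
  have hkey1 : ∀ u u', key u ≤ key u' → g u' ≤ g u := by
    intro u u' hk
    rw [hkeydef] at hk
    rcases Prod.Lex.toLex_le_toLex.1 hk with hlt | ⟨heq, -⟩
    · have := hgle u; have := hgle u'; omega
    · have := hgle u; have := hgle u'; omega
  have hkey2 : ∀ u u', key u ≤ key u' → g u = g u' → (e u : ℕ) ≤ (e u' : ℕ) := by
    intro u u' hk hgeq
    rw [hkeydef] at hk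
    rcases Prod.Lex.toLex_le_toLex.1 hk with hlt | ⟨-, hle⟩
    · simp only at hlt; omega
    · exact hle
  have hchoice : ∀ c : V, ∃ u : V, c ∈ C → u ∈ K c ∧ ∀ u' ∈ K c, key u ≤ key u' := by
    intro c
    by_cases hc : c ∈ C
    · obtain ⟨x, hx1, hx2⟩ := hout c hc
      obtain ⟨u, hu, hmin⟩ := Finset.exists_min_image (K c) key ⟨x, (hKmem c x).2 ⟨hx1, hx2⟩⟩
      exact ⟨u, fun _ => ⟨hu, hmin⟩⟩
    · exact ⟨c, fun h => absurd h hc⟩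
  choose f hf using hchoice
  have hfC : ∀ c ∈ C, f c ∉ C ∧ G.Adj c (f c) := fun c hc => (hKmem c (f c)).1 (hf c hc).1
  have hfmin : ∀ c ∈ C, ∀ u' ∈ K c, key (f c) ≤ key u' := fun c hc => (hf c hc).2
  set S := C.image f with hSdef
  -- the key claim used twice by symmetry
  have claim : ∀ c1 ∈ C, ∀ c2 ∈ C, G.Adj (f c1) (f c2) →
      G.neighborFinset (f c1) ∩ C ⊆ G.neighborFinset (f c2) ∩ C → False := by
    intro c1 hc1 c2 hc2 hadj hsub
    have h1 : c1 ∈ G.neighborFinset (f c1) ∩ C :=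
      Finset.mem_inter.2 ⟨(SimpleGraph.mem_neighborFinset _ _ _).2 (hfC c1 hc1).2.symm, hc1⟩
    have h1' := hsub h1
    have hK1 : f c2 ∈ K c1 := (hKmem _ _).2
      ⟨(hfC c2 hc2).1, ((SimpleGraph.mem_neighborFinset _ _ _).1 (Finset.mem_inter.1 h1').1).symm⟩
    have hk12 : key (f c1) ≤ key (f c2) := hfmin c1 hc1 _ hK1
    have hgcard : g (f c2) ≤ g (f c1) := hkey1 _ _ hk12
    have htr : G.neighborFinset (f c1) ∩ C = G.neighborFinset (f c2) ∩ C :=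
      Finset.eq_of_subset_of_card_le hsub hgcard
    have h2 : c2 ∈ G.neighborFinset (f c2) ∩ C :=
      Finset.mem_inter.2 ⟨(SimpleGraph.mem_neighborFinset _ _ _).2 (hfC c2 hc2).2.symm, hc2⟩
    have h2' : c2 ∈ G.neighborFinset (f c1) ∩ C := htr ▸ h2
    have hK2 : f c1 ∈ K c2 := (hKmem _ _).2
      ⟨(hfC c1 hc1).1, ((SimpleGraph.mem_neighborFinset _ _ _).1 (Finset.mem_inter.1 h2').1).symm⟩
    have hk21 : key (f c2) ≤ key (f c1) := hfmin c2 hc2 _ hK2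
    have hgeq : g (f c1) = g (f c2) := by rw [hg]; simp only; rw [htr]
    have he12 : (e (f c1) : ℕ) ≤ (e (f c2) : ℕ) := hkey2 _ _ hk12 hgeq
    have he21 : (e (f c2) : ℕ) ≤ (e (f c1) : ℕ) := hkey2 _ _ hk21 hgeq.symm
    have : f c1 = f c2 := e.injective (Fin.ext (le_antisymm he12 he21))
    exact G.irrefl (this ▸ hadj)
  have hSind : IsIndep G S := by
    intro s1 hs1 s2 hs2 hadj
    obtain ⟨c1, hc1, rfl⟩ := Finset.mem_image.1 hs1
    obtain ⟨c2, hc2, rfl⟩ := Finset.mem_image.1 hs2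
    rcases traces_comparable G hG hC.1 (hfC c1 hc1).1 (hfC c2 hc2).1 hadj with hsub | hsub
    · exact claim c1 hc1 c2 hc2 hadj hsub
    · exact claim c2 hc2 c1 hc1 hadj.symm hsub
  obtain ⟨T, hT, hST⟩ := exists_maxIndep_superset G S hSind
  obtain ⟨c, hcmem⟩ := hC.2 T hT
  have hcC := (Finset.mem_inter.1 hcmem).1
  have hcT := (Finset.mem_inter.1 hcmem).2
  have hfS : f c ∈ S := Finset.mem_image_of_mem f hcC
  exact hT.1 hcT (hST hfS) (hfC c hcC).2

/-- Two simplicial cliques sharing their centers coincide. -/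
lemma closed_eq (w z : V)
    (hw : G.IsClique ↑(insert w (G.neighborFinset w)))
    (hz : G.IsClique ↑(insert z (G.neighborFinset z)))
    (hwz : w ∈ insert z (G.neighborFinset z)) :
    insert w (G.neighborFinset w) = insert z (G.neighborFinset z) := by
  have hzw : z ∈ insert w (G.neighborFinset w) := by
    rcases (mem_closedNbhd G).1 hwz with rfl | h
    · exact Finset.mem_insert_self _ _
    · exact (mem_closedNbhd G).2 (Or.inr h.symm)
  apply Finset.Subset.antisymm <;> intro x hx
  · rcases eq_or_ne x z with rfl | hne
    · exact Finset.mem_insert_self _ _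
    · exact (mem_closedNbhd G).2 (Or.inr (hw hzw hx hne.symm))
  · rcases eq_or_ne x w with rfl | hne
    · exact Finset.mem_insert_self _ _
    · exact (mem_closedNbhd G).2 (Or.inr (hz hwz hx hne.symm))

end Aux

theorem C4Free_localizable_iff_unique_simplicial (G : SimpleGraph V) [DecidableRel G.Adj]
    (hG : C4Free G) :
    Localizable G ↔
      ∀ v : V, ∃! C : Finset V,
        (G.IsClique ↑C ∧ ∃ w, C = insert w (G.neighborFinset w)) ∧ v ∈ C := by
  classical
  constructor
  · rintro ⟨k, Cs, hstrong, hpart⟩ v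
    obtain ⟨j, hvj, hjuniq⟩ := hpart v
    obtain ⟨z, hz⟩ := strong_simplicial G hG (hstrong j)
    refine ⟨Cs j, ⟨⟨(hstrong j).1, z, hz⟩, hvj⟩, ?_⟩
    rintro D ⟨⟨hDclique, w, rfl⟩, hvD⟩
    obtain ⟨i, hwi, -⟩ := hpart w
    obtain ⟨y, hy⟩ := strong_simplicial G hG (hstrong i)
    have hwCi : w ∈ insert y (G.neighborFinset y) := hy ▸ hwi
    have hyD : y ∈ insert w (G.neighborFinset w) := by
      rcases (mem_closedNbhd G).1 hwCi with rfl | h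
      · exact Finset.mem_insert_self _ _
      · exact (mem_closedNbhd G).2 (Or.inr h.symm)
    have hvCi : v ∈ Cs i := by
      rw [hy]
      rcases eq_or_ne v y with rfl | hne
      · exact Finset.mem_insert_self _ _
      · exact (mem_closedNbhd G).2 (Or.inr (hDclique hyD hvD hne.symm))
    have hij : i = j := hjuniq i hvCi
    have hwz : w ∈ insert z (G.neighborFinset z) := by
      rw [← hz, ← hij]; exact hwi
    have hzclique : G.IsClique ↑(insert z (G.neighborFinset z)) := hz ▸ (hstrong j).1
    rw [closed_eq G w z hDclique hzclique hwz]
    exact hz.symm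
  · intro h
    set 𝒞 : Finset (Finset V) :=
      Finset.univ.filter
        (fun C => G.IsClique ↑C ∧ ∃ w, C = insert w (G.neighborFinset w)) with h𝒞
    have hprop : ∀ D ∈ 𝒞, G.IsClique ↑D ∧ ∃ w, D = insert w (G.neighborFinset w) := by
      intro D hD
      rw [h𝒞, Finset.mem_filter] at hD
      exact hD.2
    set e := 𝒞.equivFin with he
    refine ⟨𝒞.card, fun j => ((e.symm j : 𝒞) : Finset V), ?_, ?_⟩
    · intro j
      obtain ⟨hclique, w, hw⟩ := hprop _ (e.symm j).2
      show IsStrongClique G ((e.symm j : 𝒞) : Finset V)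
      rw [hw]
      exact simplicial_strong G w (hw ▸ hclique)
    · intro v
      obtain ⟨D, ⟨hD, hvD⟩, huniq⟩ := h v
      have hDmem : D ∈ 𝒞 := by
        rw [h𝒞, Finset.mem_filter]
        exact ⟨Finset.mem_univ _, hD⟩
      refine ⟨e ⟨D, hDmem⟩, by simp [hvD], ?_⟩
      intro j' hj'
      have heq : ((e.symm j' : 𝒞) : Finset V) = D :=
        huniq _ ⟨hprop _ (e.symm j').2, hj'⟩
      have heq2 : e.symm j' = ⟨D, hDmem⟩ := Subtype.ext heq
      calc j' = e (e.symm j') := (e.apply_symm_apply j').symm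
        _ = e ⟨D, hDmem⟩ := congrArg e heq2
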